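/- There is a sequence (B_n)_{n≥1} of monic polynomials B_n ∈ ℤ[c] such that A_n(c) = ∏_{d | n} B_d(c) for all n ≥ 1, where A_1(c) = c and A_{n+1}(c) = A_n(c)^2 + c. -/

import Mathlib

open Polynomial

namespace Stmt4Aux

noncomputable def Aa : ℕ → Polynomial ℤ
  | 0 => 0
  | n + 1 => Aa n ^ 2 + X

lemma Aa_succ (n : ℕ) : Aa (n + 1) = Aa n ^ 2 + X := rfl

lemma Aa_one : Aa 1 = X := by simp [Aa]

lemma Aa_monic : ∀ n, 1 ≤ n → (Aa n).Monic ∧ 1 ≤ (Aa n).natDegree := by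
  intro n hn
  induction n with
  | zero => omega
  | succ m IH =>
    rcases Nat.eq_or_lt_of_le hn with h | h
    · constructor
      · rw [show m + 1 = 1 by omega, Aa_one]; exact monic_X
      · rw [show m + 1 = 1 by omega, Aa_one]; simp
    · have hm : 1 ≤ m := by omega
      obtain ⟨hmon, hdeg⟩ := IH hm
      have hsq : (Aa m ^ 2).Monic := hmon.pow 2
      have hdeg2 : 2 ≤ (Aa m ^ 2).natDegree := by
        rw [hmon.natDegree_pow]; omega
      have hlt : (X : Polynomial ℤ).degree < (Aa m ^ 2).degree := by
        rw [degree_X, degree_eq_natDegree hsq.ne_zero]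
        exact_mod_cast lt_of_lt_of_le (by norm_num : (1:ℕ) < 2) hdeg2
      constructor
      · rw [Aa_succ]; exact hsq.add_of_left hlt
      · rw [Aa_succ, natDegree_add_eq_left_of_degree_lt hlt]; omega


lemma Aa_dvd_sub (n : ℕ) : ∀ k, Aa n ∣ Aa (n + k) - Aa k := by
  intro k
  induction k with
  | zero => simpa [Aa] using dvd_refl (Aa n)
  | succ k IH =>
    have : Aa (n + (k+1)) - Aa (k+1) = (Aa (n+k) - Aa k) * (Aa (n+k) + Aa k) := by
      rw [show n + (k+1) = (n + k) + 1 from rfl, Aa_succ, Aa_succ]; ring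
    rw [this]
    exact IH.mul_right _

lemma Aa_dvd_mul (n t : ℕ) : Aa n ∣ Aa (n * t) := by
  induction t with
  | zero => simpa [Aa] using dvd_zero (Aa n)
  | succ t IH =>
    have h1 : Aa (n * t) ∣ Aa (n * t + n) - Aa n := Aa_dvd_sub (n * t) n
    have : Aa (n * (t + 1)) = (Aa (n * t + n) - Aa n) + Aa n := by ring_nf
    rw [show n * (t+1) = n * t + n by ring]
    have := dvd_add (IH.trans h1) (dvd_refl (Aa n))
    simpa using this

lemma Aa_dvd_of_dvd {d n : ℕ} (h : d ∣ n) : Aa d ∣ Aa n := by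
  obtain ⟨t, rfl⟩ := h; exact Aa_dvd_mul d t

noncomputable def aQ (n : ℕ) : Polynomial ℚ := (Aa n).map (Int.castRingHom ℚ)

lemma aQ_monic {n : ℕ} (hn : 1 ≤ n) : (aQ n).Monic :=
  ((Aa_monic n hn).1).map _

lemma aQ_dvd_of_dvd {d n : ℕ} (h : d ∣ n) : aQ d ∣ aQ n :=
  Polynomial.map_dvd _ (Aa_dvd_of_dvd h)

lemma aQ_dvd_sub (n k : ℕ) : aQ n ∣ aQ (n + k) - aQ k := by
  have := Polynomial.map_dvd (Int.castRingHom ℚ) (Aa_dvd_sub n k)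
  simpa [aQ, Polynomial.map_sub] using this

lemma dvd_aQ_gcd {q : Polynomial ℚ} : ∀ m n : ℕ, q ∣ aQ m → q ∣ aQ n → q ∣ aQ (Nat.gcd m n) := by
  intro m n
  induction m, n using Nat.gcd.induction with
  | H0 n => intro _ h; simpa using h
  | H1 m n hm IH =>
    intro hqm hqn
    rw [Nat.gcd_rec]
    apply IH _ hqm
    have h1 : q ∣ aQ (m * (n / m)) := hqm.trans (aQ_dvd_of_dvd ⟨n / m, rfl⟩)
    have h2 : aQ (m * (n / m)) ∣ aQ (m * (n / m) + n % m) - aQ (n % m) :=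
      aQ_dvd_sub _ _
    have h3 : m * (n / m) + n % m = n := Nat.div_add_mod n m
    have hqn' : q ∣ aQ (m * (n / m) + n % m) := by rw [h3]; exact hqn
    have h4 := dvd_sub hqn' (h1.trans h2)
    simpa using h4

lemma deriv2 : ∀ n, 1 ≤ n → derivative ((Aa n).map (Int.castRingHom (ZMod 2))) = 1 := by
  intro n hn
  induction n with
  | zero => omega
  | succ m IH =>
    rcases Nat.eq_or_lt_of_le hn with h | h
    · rw [show m + 1 = 1 by omega, Aa_one]; simp
    · have hm : 1 ≤ m := by omega
      rw [Aa_succ, Polynomial.map_add, Polynomial.map_pow, Polynomial.map_X]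
      rw [derivative_add, derivative_X, derivative_pow,
        show ((2:ℕ) : ZMod 2) = 0 by decide]
      simp

lemma sf2 {n : ℕ} (hn : 1 ≤ n) : Squarefree ((Aa n).map (Int.castRingHom (ZMod 2))) := by
  apply Polynomial.Separable.squarefree
  rw [Polynomial.separable_def, deriv2 n hn]
  exact isCoprime_one_right

lemma descend {f : Polynomial ℤ} (hf : f.Monic) {g : Polynomial ℚ} (hg : g.Monic)
    (hdvd : g ∣ f.map (Int.castRingHom ℚ)) :
    ∃ G : Polynomial ℤ, G.Monic ∧ G.map (Int.castRingHom ℚ) = g := by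
  have halg : algebraMap ℤ ℚ = Int.castRingHom ℚ := by
    ext; simp
  obtain ⟨G, hG⟩ := IsIntegrallyClosed.eq_map_mul_C_of_dvd (K := ℚ) (g := g) hf
    (by rwa [halg])
  rw [hg.leadingCoeff, C_1, mul_one, halg] at hG
  refine ⟨G, ?_, hG⟩
  have hinj : Function.Injective (Int.castRingHom ℚ) := Int.cast_injective
  have hlc : (Int.castRingHom ℚ) G.leadingCoeff = (Int.castRingHom ℚ) 1 := by
    rw [← Polynomial.leadingCoeff_map_of_injective hinj, hG, hg.leadingCoeff, map_one]
  exact hinj hlc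


lemma sfQ {n : ℕ} (hn : 1 ≤ n) : Squarefree (aQ n) := by
  intro q hqq
  by_contra hq
  have hmonic := aQ_monic hn
  have hq0 : q ≠ 0 := by
    rintro rfl
    exact hmonic.ne_zero (by simpa using hqq)
  have hlc : q.leadingCoeff ≠ 0 := leadingCoeff_ne_zero.mpr hq0
  set q' := q * C q.leadingCoeff⁻¹ with hq'def
  have hq'm : q'.Monic := monic_mul_leadingCoeff_inv hq0
  have hq'dvdq : q' ∣ q :=
    ⟨C q.leadingCoeff, by rw [hq'def, mul_assoc, ← C_mul, inv_mul_cancel₀ hlc, C_1, mul_one]⟩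
  have hqq' : q' * q' ∣ aQ n := (mul_dvd_mul hq'dvdq hq'dvdq).trans hqq
  obtain ⟨Q, hQm, hQmap⟩ := descend (Aa_monic n hn).1 hq'm ((dvd_mul_right q' q').trans hqq')
  obtain ⟨h, hh⟩ := hqq'
  have hhm : h.Monic := Monic.of_mul_monic_left (hq'm.mul hq'm) (by rw [← hh]; exact hmonic)
  obtain ⟨H, hHm, hHmap⟩ := descend (Aa_monic n hn).1 hhm ⟨q' * q', by rw [show (Aa n).map (Int.castRingHom ℚ) = aQ n from rfl, hh]; ring⟩
  have hZ : Aa n = Q * Q * H := by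
    apply Polynomial.map_injective (Int.castRingHom ℚ) Int.cast_injective
    rw [Polynomial.map_mul, Polynomial.map_mul, hQmap, hHmap]
    exact hh
  have h2 : (Aa n).map (Int.castRingHom (ZMod 2)) =
      Q.map (Int.castRingHom (ZMod 2)) * Q.map (Int.castRingHom (ZMod 2)) *
        H.map (Int.castRingHom (ZMod 2)) := by
    rw [hZ, Polynomial.map_mul, Polynomial.map_mul]
  have hunit : IsUnit (Q.map (Int.castRingHom (ZMod 2))) :=
    sf2 hn _ ⟨H.map (Int.castRingHom (ZMod 2)), h2⟩
  have hQ1 : Q.map (Int.castRingHom (ZMod 2)) = 1 :=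
    (hQm.map _).eq_one_of_isUnit hunit
  have hQdeg : Q.natDegree = 0 := by
    have := hQm.natDegree_map (Int.castRingHom (ZMod 2))
    rw [hQ1, natDegree_one] at this
    omega
  have hQone : Q = 1 := (hQm.natDegree_eq_zero).mp hQdeg
  have hq'1 : q' = 1 := by rw [← hQmap, hQone, Polynomial.map_one]
  apply hq
  have hcan : q' * C q.leadingCoeff = q := by
    rw [hq'def, mul_assoc, ← C_mul, inv_mul_cancel₀ hlc, C_1, mul_one]
  have hqC : q = C q.leadingCoeff := by
    conv_lhs => rw [← hcan]
    rw [hq'1, one_mul]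
  rw [hqC]
  exact isUnit_C.mpr (isUnit_iff_ne_zero.mpr hlc)


noncomputable def b (n : ℕ) : Polynomial ℚ :=
  aQ n / ∏ d ∈ n.properDivisors.attach, b d.1
termination_by n
decreasing_by exact (Nat.mem_properDivisors.mp d.2).2

lemma b_def (n : ℕ) : b n = aQ n / ∏ d ∈ n.properDivisors, b d := by
  rw [b]
  congr 1
  exact Finset.prod_attach _ _

lemma master : ∀ n, 1 ≤ n → (b n).Monic ∧ (∏ d ∈ n.divisors, b d) = aQ n ∧
    ∀ m, 1 ≤ m → m < n → IsCoprime (b m) (b n) := by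
  intro n
  induction n using Nat.strong_induction_on with
  | _ n IH =>
  intro hn
  have hn0 : n ≠ 0 := by omega
  -- facts about proper divisors
  have hmem : ∀ d ∈ n.properDivisors, 1 ≤ d ∧ d < n ∧ d ∣ n := by
    intro d hd
    obtain ⟨hdvd, hlt⟩ := Nat.mem_properDivisors.mp hd
    exact ⟨Nat.pos_of_dvd_of_pos hdvd (by omega), hlt, hdvd⟩
  have hbdvd : ∀ m, 1 ≤ m → m < n → b m ∣ aQ m := by
    intro m h1 h2
    have := (IH m h2 h1).2.1
    rw [← this]
    exact Finset.dvd_prod_of_mem _ (Nat.mem_divisors_self m (by omega))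
  have hPmon : (∏ d ∈ n.properDivisors, b d).Monic := by
    apply monic_prod_of_monic
    intro d hd
    obtain ⟨h1, h2, _⟩ := hmem d hd
    exact (IH d h2 h1).1
  have hPdvd : (∏ d ∈ n.properDivisors, b d) ∣ aQ n := by
    apply Finset.prod_dvd_of_coprime
    · intro x hx y hy hxy
      simp only [Finset.mem_coe] at hx hy
      obtain ⟨hx1, hx2, _⟩ := hmem x hx
      obtain ⟨hy1, hy2, _⟩ := hmem y hy
      rcases lt_or_gt_of_ne hxy with h | h
      · exact (IH y hy2 hy1).2.2 x hx1 h
      · exact ((IH x hx2 hx1).2.2 y hy1 h).symm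
    · intro d hd
      obtain ⟨h1, h2, h3⟩ := hmem d hd
      exact (hbdvd d h1 h2).trans (aQ_dvd_of_dvd h3)
  have key : aQ n = (∏ d ∈ n.properDivisors, b d) * b n := by
    rw [b_def]
    exact (EuclideanDomain.mul_div_cancel' hPmon.ne_zero hPdvd).symm
  have hbmon : (b n).Monic := hPmon.of_mul_monic_left (key ▸ aQ_monic hn)
  have hprod : (∏ d ∈ n.divisors, b d) = aQ n := by
    rw [← Nat.insert_self_properDivisors hn0,
      Finset.prod_insert Nat.self_notMem_properDivisors, key]
    ring
  refine ⟨hbmon, hprod, ?_⟩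
  intro m hm hmn
  by_contra hnc
  classical
  have hbm := (IH m hmn hm).1
  have hgu : ¬IsUnit (EuclideanDomain.gcd (b m) (b n)) := fun h =>
    hnc (EuclideanDomain.gcd_isUnit_iff.mp h)
  have hg0 : EuclideanDomain.gcd (b m) (b n) ≠ 0 := fun h =>
    hbm.ne_zero (EuclideanDomain.gcd_eq_zero_iff.mp h).1
  obtain ⟨q, hqirr, hqg⟩ := WfDvdMonoid.exists_irreducible_factor hgu hg0
  have hqprime : Prime q := hqirr.prime
  have hqbm : q ∣ b m := hqg.trans (EuclideanDomain.gcd_dvd_left _ _)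
  have hqbn : q ∣ b n := hqg.trans (EuclideanDomain.gcd_dvd_right _ _)
  have hqam : q ∣ aQ m := hqbm.trans (hbdvd m hm hmn)
  have hqan : q ∣ aQ n := hqbn.trans ⟨∏ d ∈ n.properDivisors, b d, by rw [key]; ring⟩
  set g := Nat.gcd m n with hgdef
  have hg1 : 1 ≤ g := Nat.gcd_pos_of_pos_left n (by omega)
  have hgm : g ∣ m := Nat.gcd_dvd_left m n
  have hgn : g ∣ n := Nat.gcd_dvd_right m n
  have hglt : g < n := lt_of_le_of_lt (Nat.le_of_dvd (by omega) hgm) hmn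
  have hqag : q ∣ aQ g := dvd_aQ_gcd m n hqam hqan
  have hgprod := (IH g hglt hg1).2.1
  rw [← hgprod] at hqag
  obtain ⟨e, he, hqe⟩ := hqprime.exists_mem_finset_dvd hqag
  obtain ⟨hedvd, he0⟩ := Nat.mem_divisors.mp he
  have he1 : 1 ≤ e := Nat.pos_of_dvd_of_pos hedvd (by omega)
  have helt : e < n := lt_of_le_of_lt (Nat.le_of_dvd (by omega) hedvd) hglt
  have heprop : e ∈ n.properDivisors :=
    Nat.mem_properDivisors.mpr ⟨hedvd.trans hgn, helt⟩
  have hqq : q * q ∣ aQ n := by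
    rw [key]
    exact mul_dvd_mul (hqe.trans (Finset.dvd_prod_of_mem _ heprop)) hqbn
  exact hqprime.not_unit (sfQ hn q hqq)

end Stmt4Aux

theorem stmt_4 (A : ℕ → Polynomial ℤ)
    (hA1 : A 1 = X)
    (hArec : ∀ n ≥ 1, A (n + 1) = (A n) ^ 2 + X) :
    ∃ B : ℕ → Polynomial ℤ,
      (∀ n ≥ 1, (B n).Monic) ∧
      (∀ n ≥ 1, A n = ∏ d ∈ n.divisors, B d) := by
  have hAeq : ∀ n, 1 ≤ n → A n = Stmt4Aux.Aa n := by
    intro n hn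
    induction n with
    | zero => omega
    | succ m IH =>
      rcases Nat.eq_or_lt_of_le hn with h | h
      · rw [show m + 1 = 1 by omega, hA1, Stmt4Aux.Aa_one]
      · have hm : 1 ≤ m := by omega
        rw [hArec m hm, IH hm, Stmt4Aux.Aa_succ]
  have hex : ∀ n, ∃ G : Polynomial ℤ,
      1 ≤ n → (G.Monic ∧ G.map (Int.castRingHom ℚ) = Stmt4Aux.b n) := by
    intro n
    by_cases hn : 1 ≤ n
    · obtain ⟨hbm, hprod, -⟩ := Stmt4Aux.master n hn
      have hdvd : Stmt4Aux.b n ∣ Stmt4Aux.aQ n := by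
        rw [← hprod]
        exact Finset.dvd_prod_of_mem _ (Nat.mem_divisors_self n (by omega))
      obtain ⟨G, hG1, hG2⟩ := Stmt4Aux.descend (Stmt4Aux.Aa_monic n hn).1 hbm hdvd
      exact ⟨G, fun _ => ⟨hG1, hG2⟩⟩
    · exact ⟨1, fun h => absurd h hn⟩
  choose G hG using hex
  refine ⟨G, fun n hn => (hG n hn).1, fun n hn => ?_⟩
  apply Polynomial.map_injective (Int.castRingHom ℚ) Int.cast_injective
  rw [Polynomial.map_prod, hAeq n hn]
  show Stmt4Aux.aQ n = _
  rw [← (Stmt4Aux.master n hn).2.1]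
  apply Finset.prod_congr rfl
  intro d hd
  exact ((hG d (Nat.pos_of_mem_divisors hd)).2).symm
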